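/- As γ → 1-, β*(γ) tends to 1 - 1/e, and z_R(β*(γ), γ) tends to 1. -/

import Mathlib

open Real Filter

noncomputable def βstar (γ : ℝ) : ℝ :=
  ((1 / γ) ^ (γ / (1 - γ)) - γ) / ((1 / γ) ^ (γ / (1 - γ)) - γ + 1)

noncomputable def zRstar (γ : ℝ) : ℝ :=
  (1 / γ) ^ (γ / (1 - γ)) / ((1 / γ) ^ (γ / (1 - γ)) - γ + 1)

lemma key : Tendsto (fun γ : ℝ => (1 / γ) ^ (γ / (1 - γ))) (nhdsWithin 1 (Set.Iio 1))
    (nhds (Real.exp 1)) := by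
  have hslope : Tendsto (fun γ : ℝ => Real.log γ / (γ - 1)) (nhdsWithin 1 {1}ᶜ) (nhds 1) := by
    have h := (Real.hasDerivAt_log one_ne_zero)
    have h2 := hasDerivAt_iff_tendsto_slope.mp h
    convert h2 using 2 with x
    · simp [slope_def_field]
    · norm_num
  have hmono : nhdsWithin (1:ℝ) (Set.Iio 1) ≤ nhdsWithin 1 {1}ᶜ :=
    nhdsWithin_mono _ (fun x hx => ne_of_lt hx)
  have hexp : Tendsto (fun γ : ℝ => γ * (Real.log γ / (γ - 1)))
      (nhdsWithin 1 (Set.Iio 1)) (nhds 1) := by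
    have hid : Tendsto (fun γ : ℝ => γ) (nhdsWithin 1 (Set.Iio 1)) (nhds 1) :=
      tendsto_id.mono_left nhdsWithin_le_nhds
    simpa using hid.mul (hslope.mono_left hmono)
  have := (Real.continuous_exp.continuousAt (x := (1:ℝ))).tendsto.comp hexp
  refine this.congr' ?_
  filter_upwards [Ioo_mem_nhdsLT_of_mem (by norm_num : (1:ℝ) ∈ Set.Ioc 0 1)] with γ hγ
  obtain ⟨h0, h1⟩ := hγ
  rw [Real.rpow_def_of_pos (by positivity), one_div, Real.log_inv]
  simp only [Function.comp_apply, Real.exp_eq_exp]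
  have hne : γ - 1 ≠ 0 := sub_ne_zero.mpr (ne_of_lt h1)
  have hne2 : 1 - γ ≠ 0 := sub_ne_zero.mpr (ne_of_gt h1)
  field_simp
  ring

theorem stmt11 :
    Tendsto βstar (nhdsWithin 1 (Set.Iio 1)) (nhds (1 - 1 / Real.exp 1)) ∧
    Tendsto zRstar (nhdsWithin 1 (Set.Iio 1)) (nhds 1) := by
  have hid : Tendsto (fun γ : ℝ => γ) (nhdsWithin 1 (Set.Iio 1)) (nhds 1) :=
    tendsto_id.mono_left nhdsWithin_le_nhds
  have hnum : Tendsto (fun γ : ℝ => (1 / γ) ^ (γ / (1 - γ)) - γ)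
      (nhdsWithin 1 (Set.Iio 1)) (nhds (Real.exp 1 - 1)) := key.sub hid
  have hden : Tendsto (fun γ : ℝ => (1 / γ) ^ (γ / (1 - γ)) - γ + 1)
      (nhdsWithin 1 (Set.Iio 1)) (nhds (Real.exp 1)) := by
    have h := hnum.add (tendsto_const_nhds (x := (1:ℝ)))
    simpa using h
  have he : Real.exp 1 ≠ 0 := (Real.exp_pos 1).ne'
  constructor
  · have := hnum.div hden he
    unfold βstar
    convert this using 2
    · rfl
    field_simp
  · have := key.div hden he
    unfold zRstar
    simpa [div_self he, Pi.div_def] using this
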